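/- The Hamacher addition of interval valued q-rung orthopair fuzzy numbers preserves the q-rung constraint: for every real parameter φ > 0, real q ≥ 1, and real numbers u₁, u₂, v₁, v₂ ∈ [0,1] satisfying u₁^q + v₁^q ≤ 1 and u₂^q + v₂^q ≤ 1, one has S_φ(u₁^q, u₂^q) + T_φ(v₁^q, v₂^q) ≤ 1, i.e., the membership and non-membership components produced by the interval valued q-rung orthopair fuzzy Hamacher sum again satisfy the condition that the sum of their q-th powers is at most 1. -/
import Mathlib


/-- Hamacher sum (Hamacher t-conorm) with parameter `φ`. -/
noncomputable def hamacherSum (φ a b : ℝ) : ℝ :=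
  (a + b - a * b - (1 - φ) * a * b) / (1 - (1 - φ) * a * b)

/-- Hamacher product (Hamacher t-norm) with parameter `φ`. -/
noncomputable def hamacherProd (φ a b : ℝ) : ℝ :=
  a * b / (φ + (1 - φ) * (a + b - a * b))

lemma hamacher_key (φ a b c d : ℝ) (hφ : 0 < φ)
    (ha0 : 0 ≤ a) (ha1 : a ≤ 1) (hb0 : 0 ≤ b) (hb1 : b ≤ 1)
    (hc0 : 0 ≤ c) (hd0 : 0 ≤ d)
    (hca : c ≤ 1 - a) (hdb : d ≤ 1 - b) :
    hamacherSum φ a b + hamacherProd φ c d ≤ 1 := by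
  have hc1 : c ≤ 1 := by linarith
  have hd1 : d ≤ 1 := by linarith
  have hD1 : 0 < 1 - (1 - φ) * a * b := by
    nlinarith [mul_nonneg ha0 hb0, mul_le_one₀ ha1 hb0 hb1, mul_pos hφ hφ]
  have hD2 : 0 < φ + (1 - φ) * (c + d - c * d) := by
    rcases le_total φ 1 with h | h
    · nlinarith [mul_nonneg hc0 (sub_nonneg.2 hd1), mul_nonneg hd0 (sub_nonneg.2 hc1)]
    · nlinarith [mul_nonneg (sub_nonneg.2 hc1) (sub_nonneg.2 hd1)]
  unfold hamacherSum hamacherProd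
  rw [div_add_div _ _ hD1.ne' hD2.ne', div_le_one (mul_pos hD1 hD2)]
  nlinarith [mul_nonneg (mul_nonneg hc0 (by nlinarith : (0:ℝ) ≤ φ + (1 - φ) * (1 - a)))
      (by linarith : (0:ℝ) ≤ (1 - b) - d),
    mul_nonneg (mul_nonneg (by linarith : (0:ℝ) ≤ 1 - b)
      (by nlinarith : (0:ℝ) ≤ φ + (1 - φ) * d)) (by linarith : (0:ℝ) ≤ (1 - a) - c)]

theorem hamacher_addition_preserves_qrung (φ q u₁ u₂ v₁ v₂ : ℝ) (hφ : 0 < φ) (hq : 1 ≤ q)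
    (hu₁ : u₁ ∈ Set.Icc (0:ℝ) 1) (hu₂ : u₂ ∈ Set.Icc (0:ℝ) 1)
    (hv₁ : v₁ ∈ Set.Icc (0:ℝ) 1) (hv₂ : v₂ ∈ Set.Icc (0:ℝ) 1)
    (h₁ : u₁ ^ q + v₁ ^ q ≤ 1) (h₂ : u₂ ^ q + v₂ ^ q ≤ 1) :
    hamacherSum φ (u₁ ^ q) (u₂ ^ q) + hamacherProd φ (v₁ ^ q) (v₂ ^ q) ≤ 1 := by
  have hq0 : 0 ≤ q := by linarith
  have ha0 : 0 ≤ u₁ ^ q := Real.rpow_nonneg hu₁.1 q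
  have hb0 : 0 ≤ u₂ ^ q := Real.rpow_nonneg hu₂.1 q
  have hc0 : 0 ≤ v₁ ^ q := Real.rpow_nonneg hv₁.1 q
  have hd0 : 0 ≤ v₂ ^ q := Real.rpow_nonneg hv₂.1 q
  have ha1 : u₁ ^ q ≤ 1 := Real.rpow_le_one hu₁.1 hu₁.2 hq0
  have hb1 : u₂ ^ q ≤ 1 := Real.rpow_le_one hu₂.1 hu₂.2 hq0
  exact hamacher_key φ _ _ _ _ hφ ha0 ha1 hb0 hb1 hc0 hd0 (by linarith) (by linarith)
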